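/- Gronwall-type moment bound: let y : [0,∞) → [0,∞) be differentiable with y(0) = 0 and y'(t) ≤ a·(1 + y(t))^{1 - 1/k} + b·Σ_{l=1}^{k} c^{l/k}·(1 + y(t))^{1 - l/k} for constants a, b, c ≥ 0 and integer k ≥ 1. Then y(t)^{1/k} ≤ C + C·t·(a + b·(c^{1/k} + c)) for some universal constant C depending only on k. -/

import Mathlib

open Real

/-- Gronwall-type moment bound: for every `k ≥ 1` there is a constant `C > 0` (depending
only on `k`) such that any nonnegative differentiable `y` with `y 0 = 0` satisfying
`y' t ≤ a (1 + y t)^{1 - 1/k} + b Σ_{l=1}^k c^{l/k} (1 + y t)^{1 - l/k}` on `[0,∞)`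
satisfies `(y t)^{1/k} ≤ C + C t (a + b (c^{1/k} + c))`. -/
theorem gronwall_moment_bound (k : ℕ) (hk : 1 ≤ k) :
    ∃ C : ℝ, 0 < C ∧
      ∀ (a b c : ℝ), 0 ≤ a → 0 ≤ b → 0 ≤ c →
      ∀ (y y' : ℝ → ℝ),
        (∀ t, 0 ≤ t → 0 ≤ y t) → y 0 = 0 →
        (∀ t, 0 ≤ t → HasDerivAt y (y' t) t) →
        (∀ t, 0 ≤ t →
          y' t ≤ a * (1 + y t) ^ ((1 : ℝ) - 1 / k)
            + b * ∑ l ∈ Finset.Icc 1 k,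
                c ^ ((l : ℝ) / k) * (1 + y t) ^ ((1 : ℝ) - (l : ℝ) / k)) →
        ∀ t, 0 ≤ t →
          (y t) ^ ((1 : ℝ) / k) ≤ C + C * t * (a + b * (c ^ ((1 : ℝ) / k) + c)) := by
  refine ⟨1, one_pos, ?_⟩
  intro a b c ha hb hc y y' hy hy0 hder hineq t ht
  have hK : (1 : ℝ) ≤ (k : ℝ) := by exact_mod_cast hk
  have hK0 : (0 : ℝ) < (k : ℝ) := lt_of_lt_of_le one_pos hK
  set X : ℝ := c ^ ((1 : ℝ) / k) + c with hX
  have hX0 : 0 ≤ X := add_nonneg (rpow_nonneg hc _) hc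
  set M : ℝ := a + b * k * X with hM
  have hM0 : 0 ≤ M := add_nonneg ha (mul_nonneg (mul_nonneg hb hK0.le) hX0)
  -- c^{l/k} ≤ X for 1 ≤ l ≤ k
  have hcl : ∀ l ∈ Finset.Icc 1 k, c ^ ((l : ℝ) / k) ≤ X := by
    intro l hl
    simp only [Finset.mem_Icc] at hl
    have hl1 : (1 : ℝ) ≤ (l : ℝ) := by exact_mod_cast hl.1
    have hlk : (l : ℝ) ≤ (k : ℝ) := by exact_mod_cast hl.2
    rcases eq_or_lt_of_le hc with h0 | h0
    · have : c ^ ((l : ℝ) / k) = 0 := by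
        rw [← h0]; exact zero_rpow (by positivity)
      rw [this]; exact hX0
    rcases le_total c 1 with h1 | h1
    · calc c ^ ((l : ℝ) / k) ≤ c ^ ((1 : ℝ) / k) :=
            rpow_le_rpow_of_exponent_ge h0 h1 (by gcongr)
      _ ≤ X := le_add_of_nonneg_right h0.le
    · calc c ^ ((l : ℝ) / k) ≤ c ^ (1 : ℝ) :=
            rpow_le_rpow_of_exponent_le h1 (by rw [div_le_one hK0]; exact hlk)
      _ = c := rpow_one c
      _ ≤ X := le_add_of_nonneg_left (rpow_nonneg hc _)
  -- pointwise bound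
  have key : ∀ s, 0 ≤ s → y' s ≤ M * (1 + y s) ^ ((1 : ℝ) - 1 / k) := by
    intro s hs
    have hys := hy s hs
    have h1y : (1 : ℝ) ≤ 1 + y s := le_add_of_nonneg_right hys
    have h1y0 : (0 : ℝ) < 1 + y s := lt_of_lt_of_le one_pos h1y
    set P : ℝ := (1 + y s) ^ ((1 : ℝ) - 1 / k) with hP
    have hP0 : 0 ≤ P := rpow_nonneg h1y0.le _
    have hsum : ∑ l ∈ Finset.Icc 1 k, c ^ ((l : ℝ) / k) * (1 + y s) ^ ((1 : ℝ) - (l : ℝ) / k)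
        ≤ (k : ℝ) * (X * P) := by
      calc ∑ l ∈ Finset.Icc 1 k, c ^ ((l : ℝ) / k) * (1 + y s) ^ ((1 : ℝ) - (l : ℝ) / k)
          ≤ ∑ _l ∈ Finset.Icc 1 k, X * P := by
            apply Finset.sum_le_sum
            intro l hl
            have hl' := Finset.mem_Icc.mp hl
            have hl1 : (1 : ℝ) ≤ (l : ℝ) := by exact_mod_cast hl'.1
            refine mul_le_mul (hcl l hl) ?_ (rpow_nonneg h1y0.le _) hX0
            exact rpow_le_rpow_of_exponent_le h1y (by gcongr)
        _ = (k : ℝ) * (X * P) := by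
            rw [Finset.sum_const, Nat.card_Icc, nsmul_eq_mul]
            norm_num
    have h1 := hineq s hs
    have h2 : b * ∑ l ∈ Finset.Icc 1 k, c ^ ((l : ℝ) / k) * (1 + y s) ^ ((1 : ℝ) - (l : ℝ) / k)
        ≤ b * ((k : ℝ) * (X * P)) := mul_le_mul_of_nonneg_left hsum hb
    calc y' s ≤ a * P + b * ∑ l ∈ Finset.Icc 1 k,
          c ^ ((l : ℝ) / k) * (1 + y s) ^ ((1 : ℝ) - (l : ℝ) / k) := h1
      _ ≤ a * P + b * ((k : ℝ) * (X * P)) := by linarith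
      _ = M * P := by rw [hM]; ring
  -- the function F
  set r : ℝ := (1 : ℝ) / k with hr
  have hr0 : 0 < r := by positivity
  set F : ℝ → ℝ := fun u => 1 + (M / k) * u - (1 + y u) ^ r with hF
  have hFd : ∀ s ∈ Set.Ici (0 : ℝ),
      HasDerivAt F (M / k - y' s * r * (1 + y s) ^ (r - 1)) s := by
    intro s hs
    have hys := hy s hs
    have h1y0 : (0 : ℝ) < 1 + y s := by linarith
    have hg : HasDerivAt (fun u => (1 + y u) ^ r) (y' s * r * (1 + y s) ^ (r - 1)) s := by
      have := ((hasDerivAt_const s (1 : ℝ)).add (hder s hs)).rpow_const (p := r) (Or.inl h1y0.ne')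
      simpa using this
    have hlin : HasDerivAt (fun u => 1 + (M / k) * u) (M / k) s := by
      have h := ((hasDerivAt_id s).const_mul (M / k)).const_add 1
      rw [mul_one] at h
      exact h
    exact hlin.sub hg
  have hmono : MonotoneOn F (Set.Ici 0) := by
    apply monotoneOn_of_deriv_nonneg (convex_Ici 0)
    · intro s hs; exact (hFd s hs).continuousAt.continuousWithinAt
    · intro s hs
      rw [interior_Ici] at hs
      exact (hFd s (Set.Ioi_subset_Ici_self hs)).differentiableAt.differentiableWithinAt
    · intro s hs
      rw [interior_Ici] at hs
      rw [(hFd s (Set.Ioi_subset_Ici_self hs)).deriv]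
      have hkey := key s hs.le
      have hys := hy s hs.le
      have h1y0 : (0 : ℝ) < 1 + y s := by linarith
      have hQ : (0 : ℝ) < (1 + y s) ^ (r - 1) := rpow_pos_of_pos h1y0 _
      have h3 : y' s * (1 + y s) ^ (r - 1)
          ≤ M * (1 + y s) ^ ((1 : ℝ) - 1 / k) * (1 + y s) ^ (r - 1) :=
        mul_le_mul_of_nonneg_right hkey hQ.le
      rw [mul_assoc, ← rpow_add h1y0] at h3
      have hexp : (1 : ℝ) - 1 / k + (r - 1) = 0 := by rw [hr]; ring
      rw [hexp, rpow_zero, mul_one] at h3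
      have hMk : M / (k : ℝ) = M * r := by rw [hr]; field_simp
      rw [hMk]
      nlinarith [hr0]
  have hF0 : F 0 = 0 := by
    simp only [hF, hy0]
    norm_num
  have hFt : 0 ≤ F t := by
    rw [← hF0]
    exact hmono (Set.self_mem_Ici) ht ht
  -- conclude
  have h4 : (y t) ^ r ≤ (1 + y t) ^ r :=
    rpow_le_rpow (hy t ht) (by linarith [hy t ht]) hr0.le
  have h5 : (1 + y t) ^ r ≤ 1 + (M / k) * t := by
    simp only [hF] at hFt; linarith
  have h6 : M / k ≤ a + b * X := by
    rw [div_le_iff₀ hK0, hM]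
    nlinarith [mul_nonneg hb hX0]
  calc (y t) ^ r ≤ 1 + (M / k) * t := le_trans h4 h5
    _ ≤ 1 + (a + b * X) * t := by nlinarith
    _ = 1 + 1 * t * (a + b * X) := by ring
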